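/- If there exist an OMZD(m+1) and an OMZD(n+1), then there exists an OMZD(m+n). Specifically, if M = [[0, uᵀ],[v, B]] and N = [[0, xᵀ],[y, C]] are OMZDs of orders m+1 and n+1 scaled so that M·Mᵀ = I and N·Nᵀ = I, then the block matrix Q = [[B, v·xᵀ],[y·uᵀ, C]] satisfies Q·Qᵀ = I, has zero diagonal, and has all off-diagonal entries nonzero. -/

import Mathlib

open Matrix

/-- An OMZD over an arbitrary finite index type: `A * Aᵀ = c • I` for some `c > 0`,
zero diagonal, all off-diagonal entries nonzero. -/
def IsOMZD {ι : Type*} [Fintype ι] [DecidableEq ι] (A : Matrix ι ι ℝ) : Prop :=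
  (∃ c : ℝ, 0 < c ∧ A * Aᵀ = c • (1 : Matrix ι ι ℝ)) ∧
  (∀ i, A i i = 0) ∧ (∀ i j, i ≠ j → A i j ≠ 0)

/-- If `M = [[0, uᵀ],[v, B]]` and `N = [[0, xᵀ],[y, C]]` are OMZDs of orders `m+1` and
`n+1` scaled so that `M * Mᵀ = 1` and `N * Nᵀ = 1`, then `Q = [[B, v xᵀ],[y uᵀ, C]]`
is an OMZD of order `m + n` with `Q * Qᵀ = 1`. -/
theorem omzd_adding (m n : ℕ) (u v : Fin m → ℝ) (x y : Fin n → ℝ)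
    (B : Matrix (Fin m) (Fin m) ℝ) (C : Matrix (Fin n) (Fin n) ℝ)
    (M : Matrix (Fin 1 ⊕ Fin m) (Fin 1 ⊕ Fin m) ℝ)
    (N : Matrix (Fin 1 ⊕ Fin n) (Fin 1 ⊕ Fin n) ℝ)
    (hM : M = Matrix.fromBlocks 0 (Matrix.of fun (_ : Fin 1) j => u j)
      (Matrix.of fun i (_ : Fin 1) => v i) B)
    (hN : N = Matrix.fromBlocks 0 (Matrix.of fun (_ : Fin 1) j => x j)
      (Matrix.of fun i (_ : Fin 1) => y i) C)
    (hMomzd : IsOMZD M) (hNomzd : IsOMZD N)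
    (hMorth : M * Mᵀ = 1) (hNorth : N * Nᵀ = 1) :
    let Q : Matrix (Fin m ⊕ Fin n) (Fin m ⊕ Fin n) ℝ :=
      Matrix.fromBlocks B (Matrix.vecMulVec v x) (Matrix.vecMulVec y u) C
    Q * Qᵀ = 1 ∧ (∀ i, Q i i = 0) ∧ (∀ i j, i ≠ j → Q i j ≠ 0) := by
  obtain ⟨-, hMd, hMo⟩ := hMomzd
  obtain ⟨-, hNd, hNo⟩ := hNomzd
  subst hM hN
  intro Q
  have hu : ∑ k, u k * u k = 1 := by
    have := congrFun (congrFun hMorth (Sum.inl 0)) (Sum.inl 0)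
    simpa [Matrix.mul_apply, Fintype.sum_sum_type, Matrix.one_apply] using this
  have hx : ∑ k, x k * x k = 1 := by
    have := congrFun (congrFun hNorth (Sum.inl 0)) (Sum.inl 0)
    simpa [Matrix.mul_apply, Fintype.sum_sum_type, Matrix.one_apply] using this
  have hBu : ∀ i : Fin m, ∑ k, B i k * u k = 0 := by
    intro i
    have := congrFun (congrFun hMorth (Sum.inr i)) (Sum.inl 0)
    simpa [Matrix.mul_apply, Fintype.sum_sum_type, Matrix.one_apply] using this
  have hCx : ∀ i : Fin n, ∑ k, C i k * x k = 0 := by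
    intro i
    have := congrFun (congrFun hNorth (Sum.inr i)) (Sum.inl 0)
    simpa [Matrix.mul_apply, Fintype.sum_sum_type, Matrix.one_apply] using this
  have hBB : ∀ i j : Fin m,
      v i * v j + ∑ k, B i k * B j k = if i = j then (1:ℝ) else 0 := by
    intro i j
    have := congrFun (congrFun hMorth (Sum.inr i)) (Sum.inr j)
    simpa [Matrix.mul_apply, Fintype.sum_sum_type, Matrix.one_apply] using this
  have hCC : ∀ i j : Fin n,
      y i * y j + ∑ k, C i k * C j k = if i = j then (1:ℝ) else 0 := by
    intro i j
    have := congrFun (congrFun hNorth (Sum.inr i)) (Sum.inr j)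
    simpa [Matrix.mul_apply, Fintype.sum_sum_type, Matrix.one_apply] using this
  refine ⟨?_, ?_, ?_⟩
  · ext i j
    rcases i with i | i <;> rcases j with j | j <;>
      simp only [Q, Matrix.mul_apply, Matrix.transpose_apply, Fintype.sum_sum_type,
        Matrix.fromBlocks_apply₁₁, Matrix.fromBlocks_apply₁₂, Matrix.fromBlocks_apply₂₁,
        Matrix.fromBlocks_apply₂₂, Matrix.vecMulVec_apply, Matrix.one_apply, Sum.inl.injEq,
        Sum.inr.injEq, reduceCtorEq, if_false]
    · have h1 : ∑ k, v i * x k * (v j * x k) = v i * v j * ∑ k, x k * x k := by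
        rw [Finset.mul_sum]; exact Finset.sum_congr rfl fun k _ => by ring
      rw [h1, hx, mul_one, add_comm, hBB i j]
    · have h1 : ∑ k, B i k * (y j * u k) = y j * ∑ k, B i k * u k := by
        rw [Finset.mul_sum]; exact Finset.sum_congr rfl fun k _ => by ring
      have h2 : ∑ k, v i * x k * C j k = v i * ∑ k, C j k * x k := by
        rw [Finset.mul_sum]; exact Finset.sum_congr rfl fun k _ => by ring
      rw [h1, h2, hBu i, hCx j, mul_zero, mul_zero, add_zero]
    · have h1 : ∑ k, y i * u k * B j k = y i * ∑ k, B j k * u k := by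
        rw [Finset.mul_sum]; exact Finset.sum_congr rfl fun k _ => by ring
      have h2 : ∑ k, C i k * (v j * x k) = v j * ∑ k, C i k * x k := by
        rw [Finset.mul_sum]; exact Finset.sum_congr rfl fun k _ => by ring
      rw [h1, h2, hBu j, hCx i, mul_zero, mul_zero, add_zero]
    · have h1 : ∑ k, y i * u k * (y j * u k) = y i * y j * ∑ k, u k * u k := by
        rw [Finset.mul_sum]; exact Finset.sum_congr rfl fun k _ => by ring
      rw [h1, hu, mul_one, hCC i j]
  · rintro (i | i)
    · simpa [Q] using hMd (Sum.inr i)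
    · simpa [Q] using hNd (Sum.inr i)
  · rintro (i | i) (j | j) hij
    · have : Sum.inr i ≠ (Sum.inr j : Fin 1 ⊕ Fin m) := by
        simpa using fun h => hij (by simp [h])
      simpa [Q] using hMo _ _ this
    · have h1 : v i ≠ 0 := by
        simpa using hMo (Sum.inr i) (Sum.inl 0) (by simp)
      have h2 : x j ≠ 0 := by
        simpa using hNo (Sum.inl 0) (Sum.inr j) (by simp)
      simpa [Q, Matrix.vecMulVec_apply] using mul_ne_zero h1 h2
    · have h1 : y i ≠ 0 := by
        simpa using hNo (Sum.inr i) (Sum.inl 0) (by simp)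
      have h2 : u j ≠ 0 := by
        simpa using hMo (Sum.inl 0) (Sum.inr j) (by simp)
      simpa [Q, Matrix.vecMulVec_apply] using mul_ne_zero h1 h2
    · have : Sum.inr i ≠ (Sum.inr j : Fin 1 ⊕ Fin n) := by
        simpa using fun h => hij (by simp [h])
      simpa [Q] using hNo _ _ this
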